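/- Let a ∈ ℝ, Ω ⊆ ℂ open, and F holomorphic on Ω with F′ nonvanishing and 1 + a|F|² > 0 on Ω. Then the smooth function f(x,y) = log( 4|F′(x+iy)|² / (1 + a|F(x+iy)|²)² ) satisfies the Liouville equation f_xx + f_yy + 2a·e^f = 0 on {(x,y) : x+iy ∈ Ω}. -/

import Mathlib

open Complex

lemma hasDerivAt_creal {g : ℝ → ℂ} {c : ℂ} {x : ℝ} (hg : HasDerivAt g c x) :
    HasDerivAt (fun t => (g t).re) c.re x := by
  have := (Complex.reCLM.hasFDerivAt.comp x hg.hasFDerivAt).hasDerivAt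
  exact this.congr_deriv (by simp)

lemma hasDerivAt_cimag {g : ℝ → ℂ} {c : ℂ} {x : ℝ} (hg : HasDerivAt g c x) :
    HasDerivAt (fun t => (g t).im) c.im x := by
  have := (Complex.imCLM.hasFDerivAt.comp x hg.hasFDerivAt).hasDerivAt
  exact this.congr_deriv (by simp)

/-- derivative of t ↦ Re(conj (g t) * h t) -/
lemma hasDerivAt_reconj {g h : ℝ → ℂ} {c d : ℂ} {x : ℝ}
    (hg : HasDerivAt g c x) (hh : HasDerivAt h d x) :
    HasDerivAt (fun t => ((starRingEnd ℂ) (g t) * h t).re)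
      (((starRingEnd ℂ) c * h x).re + ((starRingEnd ℂ) (g x) * d).re) x := by
  have H : ∀ z w : ℂ, ((starRingEnd ℂ) z * w).re = z.re * w.re + z.im * w.im := by
    intro z w; simp [Complex.mul_re]
  simp only [H]
  have := ((hasDerivAt_creal hg).mul (hasDerivAt_creal hh)).add
    ((hasDerivAt_cimag hg).mul (hasDerivAt_cimag hh))
  exact this.congr_deriv (by ring)

lemma hasDerivAt_normSq {g : ℝ → ℂ} {c : ℂ} {x : ℝ} (hg : HasDerivAt g c x) :
    HasDerivAt (fun t => Complex.normSq (g t)) (2 * ((starRingEnd ℂ) (g x) * c).re) x := by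
  have H := hasDerivAt_reconj hg hg
  have e : ∀ t, Complex.normSq (g t) = ((starRingEnd ℂ) (g t) * g t).re := by
    intro t; simp [Complex.normSq_apply, Complex.mul_re]
  simp only [e]
  convert H using 1
  have : ((starRingEnd ℂ) c * g x).re = ((starRingEnd ℂ) (g x) * c).re := by
    simp [Complex.mul_re]; ring
  rw [this]; ring

/-- first derivative of the log expression along a curve -/
lemma hasDerivAt_logquot (a : ℝ) {g g1 : ℝ → ℂ} {d1 d2 : ℂ} {x : ℝ}
    (hg : HasDerivAt g d1 x) (hg1 : HasDerivAt g1 d2 x)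
    (hne : g1 x ≠ 0) (hN : 0 < 1 + a * Complex.normSq (g x)) :
    HasDerivAt (fun t => Real.log (4 * Complex.normSq (g1 t) / (1 + a * Complex.normSq (g t))^2))
      (2 * ((starRingEnd ℂ) (g1 x) * d2).re / Complex.normSq (g1 x)
        - 4 * a * ((starRingEnd ℂ) (g x) * d1).re / (1 + a * Complex.normSq (g x))) x := by
  have hv : (0:ℝ) < Complex.normSq (g1 x) := Complex.normSq_pos.mpr hne
  have hvne := ne_of_gt hv
  have hNne := ne_of_gt hN
  have hnum : HasDerivAt (fun t => 4 * Complex.normSq (g1 t))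
      (4 * (2 * ((starRingEnd ℂ) (g1 x) * d2).re)) x := (hasDerivAt_normSq hg1).const_mul 4
  have hNd : HasDerivAt (fun t => 1 + a * Complex.normSq (g t))
      (a * (2 * ((starRingEnd ℂ) (g x) * d1).re)) x :=
    ((hasDerivAt_normSq hg).const_mul a).const_add 1
  have hden := hNd.pow 2
  have hq := hnum.div hden (pow_ne_zero 2 hNne)
  have hqne : 4 * Complex.normSq (g1 x) / (1 + a * Complex.normSq (g x))^2 ≠ 0 :=
    div_ne_zero (by positivity) (pow_ne_zero 2 hNne)
  have hlog := hq.log hqne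
  refine hlog.congr_deriv ?_
  simp only [Pi.div_apply, Pi.pow_apply]
  field_simp
  ring

/-- second derivative: derivative of the first-derivative formula along a curve with direction c -/
lemma hasDerivAt_formula (a : ℝ) (c : ℂ) {g g1 g2 : ℝ → ℂ} {g3x : ℂ} {x : ℝ}
    (hg : HasDerivAt g (c * g1 x) x) (hg1 : HasDerivAt g1 (c * g2 x) x)
    (hg2 : HasDerivAt g2 (c * g3x) x)
    (hne : g1 x ≠ 0) (hN : 0 < 1 + a * Complex.normSq (g x)) :
    HasDerivAt (fun t => 2 * ((starRingEnd ℂ) (g1 t) * (c * g2 t)).re / Complex.normSq (g1 t)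
        - 4 * a * ((starRingEnd ℂ) (g t) * (c * g1 t)).re / (1 + a * Complex.normSq (g t)))
      ((2 * (Complex.normSq (c * g2 x) + ((starRingEnd ℂ) (g1 x) * (c * (c * g3x))).re)
          * Complex.normSq (g1 x)
        - (2 * ((starRingEnd ℂ) (g1 x) * (c * g2 x)).re)^2) / (Complex.normSq (g1 x))^2
      - 4 * a * ((Complex.normSq (c * g1 x) + ((starRingEnd ℂ) (g x) * (c * (c * g2 x))).re)
          * (1 + a * Complex.normSq (g x))
        - 2 * a * (((starRingEnd ℂ) (g x) * (c * g1 x)).re)^2)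
          / (1 + a * Complex.normSq (g x))^2) x := by
  have hv : (0:ℝ) < Complex.normSq (g1 x) := Complex.normSq_pos.mpr hne
  have hvne := ne_of_gt hv
  have hNne := ne_of_gt hN
  have h1 : HasDerivAt (fun t => 2 * ((starRingEnd ℂ) (g1 t) * (c * g2 t)).re)
      (2 * (((starRingEnd ℂ) (c * g2 x) * (c * g2 x)).re
        + ((starRingEnd ℂ) (g1 x) * (c * (c * g3x))).re)) x :=
    (hasDerivAt_reconj hg1 (hg2.const_mul c)).const_mul 2
  have hden1 := hasDerivAt_normSq hg1
  have hq1 := h1.div hden1 hvne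
  have h2 : HasDerivAt (fun t => ((starRingEnd ℂ) (g t) * (c * g1 t)).re)
      (((starRingEnd ℂ) (c * g1 x) * (c * g1 x)).re
        + ((starRingEnd ℂ) (g x) * (c * (c * g2 x))).re) x :=
    hasDerivAt_reconj hg (hg1.const_mul c)
  have hden2 : HasDerivAt (fun t => 1 + a * Complex.normSq (g t))
      (a * (2 * ((starRingEnd ℂ) (g x) * (c * g1 x)).re)) x :=
    ((hasDerivAt_normSq hg).const_mul a).const_add 1
  have hq2 := (h2.div hden2 hNne).const_mul (4 * a)
  have := hq1.sub hq2
  refine HasDerivAt.congr_deriv (this.congr_of_eventuallyEq (Filter.Eventually.of_forall fun t => by simp only [Pi.div_apply, Pi.sub_apply]; ring)) ?_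
  have e1 : ((starRingEnd ℂ) (c * g2 x) * (c * g2 x)).re = Complex.normSq (c * g2 x) := by
    simp [Complex.mul_re, Complex.normSq_apply]; ring
  have e2 : ((starRingEnd ℂ) (c * g1 x) * (c * g1 x)).re = Complex.normSq (c * g1 x) := by
    simp [Complex.mul_re, Complex.normSq_apply]; ring
  rw [e1, e2]
  field_simp

lemma lineX {G : ℂ → ℂ} {d : ℂ} (t y : ℝ) (h : HasDerivAt G d (↑t + ↑y * I)) :
    HasDerivAt (fun s : ℝ => G (↑s + ↑y * I)) d t := by
  have hl : HasDerivAt (fun s : ℝ => ((s : ℂ) + ↑y * I)) 1 t := by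
    simpa using (Complex.ofRealCLM.hasDerivAt (x := t)).add_const (↑y * I)
  exact (h.scomp (x := t) hl).congr_deriv (one_smul _ _)

lemma lineY {G : ℂ → ℂ} {d : ℂ} (x s : ℝ) (h : HasDerivAt G d (↑x + ↑s * I)) :
    HasDerivAt (fun t : ℝ => G (↑x + ↑t * I)) (I * d) s := by
  have hl : HasDerivAt (fun t : ℝ => ((x : ℂ) + ↑t * I)) I s := by
    simpa using ((Complex.ofRealCLM.hasDerivAt (x := s)).mul_const I).const_add (x : ℂ)
  have := h.scomp (x := s) hl
  exact this.congr_deriv (smul_eq_mul _ _)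



/-- Partial derivative in the first variable of a function of two real variables. -/
noncomputable def pdx2 (f : ℝ → ℝ → ℝ) : ℝ → ℝ → ℝ :=
  fun x y => deriv (fun t => f t y) x

/-- Partial derivative in the second variable of a function of two real variables. -/
noncomputable def pdy2 (f : ℝ → ℝ → ℝ) : ℝ → ℝ → ℝ :=
  fun x y => deriv (fun t => f x t) y

/-- for `F` holomorphic on `Ω` with nonvanishing derivative `F′` and with
`1 + a|F|² > 0` on `Ω`, the function `f(x,y) = log( 4|F′(x+iy)|² / (1 + a|F(x+iy)|²)² )`
satisfies the Liouville equation `f_xx + f_yy + 2a·e^f = 0` on `{(x,y) : x+iy ∈ Ω}`. -/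
theorem liouville_solution_from_holomorphic_data
    (a : ℝ) (Ω : Set ℂ) (hΩ : IsOpen Ω)
    (F F' : ℂ → ℂ)
    (hF : ∀ ζ ∈ Ω, HasDerivAt F (F' ζ) ζ)
    (hF' : ∀ ζ ∈ Ω, F' ζ ≠ 0)
    (hpos : ∀ ζ ∈ Ω, 0 < 1 + a * (‖F ζ‖)^2)
    (f : ℝ → ℝ → ℝ)
    (hf : ∀ x y : ℝ,
      f x y = Real.log (4 * (‖F' (x + y * Complex.I)‖)^2 /
        (1 + a * (‖F (x + y * Complex.I)‖)^2)^2)) :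
    ∀ x y : ℝ, (x + y * Complex.I) ∈ Ω →
      pdx2 (pdx2 f) x y + pdy2 (pdy2 f) x y + 2 * a * Real.exp (f x y) = 0 := by
  have hfd : DifferentiableOn ℂ F Ω := fun z hz =>
    (hF z hz).differentiableAt.differentiableWithinAt
  have han : AnalyticOnNhd ℂ F Ω := hfd.analyticOnNhd hΩ
  set F2 : ℂ → ℂ := deriv (deriv F) with hF2def
  set F3 : ℂ → ℂ := deriv F2 with hF3def
  have hD1 : ∀ ζ ∈ Ω, HasDerivAt F' (F2 ζ) ζ := by
    intro z hz
    have h1 : HasDerivAt (deriv F) (F2 z) z := (han.deriv z hz).differentiableAt.hasDerivAt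
    have heq : (fun w => F' w) =ᶠ[nhds z] deriv F := by
      filter_upwards [hΩ.mem_nhds hz] with w hw
      exact ((hF w hw).deriv).symm
    exact heq.hasDerivAt_iff.mpr h1
  have hD2 : ∀ ζ ∈ Ω, HasDerivAt F2 (F3 ζ) ζ := fun z hz =>
    (han.deriv.deriv z hz).differentiableAt.hasDerivAt
  have hNpos : ∀ ζ ∈ Ω, 0 < 1 + a * Complex.normSq (F ζ) := by
    intro z hz
    simpa [← Complex.sq_norm] using hpos z hz
  have hf' : ∀ x y : ℝ, f x y = Real.log (4 * Complex.normSq (F' (↑x + ↑y * I)) /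
      (1 + a * Complex.normSq (F (↑x + ↑y * I)))^2) := by
    intro x y; rw [hf]; simp [Complex.sq_norm]
  intro x y hxy
  set ζ : ℂ := ↑x + ↑y * I with hζ
  have hvne : Complex.normSq (F' ζ) ≠ 0 := ne_of_gt (Complex.normSq_pos.mpr (hF' ζ hxy))
  have hNne : 1 + a * Complex.normSq (F ζ) ≠ 0 := ne_of_gt (hNpos ζ hxy)
  -- x direction
  have hpx : ∀ t : ℝ, (↑t + ↑y * I) ∈ Ω → HasDerivAt (fun s => f s y)
      (2 * ((starRingEnd ℂ) (F' (↑t + ↑y * I)) * ((1:ℂ) * F2 (↑t + ↑y * I))).re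
          / Complex.normSq (F' (↑t + ↑y * I))
        - 4 * a * ((starRingEnd ℂ) (F (↑t + ↑y * I)) * ((1:ℂ) * F' (↑t + ↑y * I))).re
          / (1 + a * Complex.normSq (F (↑t + ↑y * I)))) t := by
    intro t ht
    have hg : HasDerivAt (fun s : ℝ => F (↑s + ↑y * I)) (F' (↑t + ↑y * I)) t :=
      lineX t y (hF _ ht)
    have hg1 : HasDerivAt (fun s : ℝ => F' (↑s + ↑y * I)) (F2 (↑t + ↑y * I)) t :=
      lineX t y (hD1 _ ht)
    have H := hasDerivAt_logquot a hg hg1 (hF' _ ht) (hNpos _ ht)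
    have hfe : (fun s => f s y) = fun s : ℝ => Real.log (4 * Complex.normSq (F' (↑s + ↑y * I)) /
        (1 + a * Complex.normSq (F (↑s + ↑y * I)))^2) := funext fun s : ℝ => hf' s y
    rw [hfe]
    simpa [one_mul] using H
  have hevx : ∀ᶠ t : ℝ in nhds x, ((t:ℂ) + ↑y * I) ∈ Ω := by
    have hc : Continuous fun t : ℝ => ((t:ℂ) + ↑y * I) :=
      (Complex.continuous_ofReal.add continuous_const)
    exact (hc.isOpen_preimage _ hΩ).mem_nhds hxy
  have hpdx_eq : (fun t => pdx2 f t y) =ᶠ[nhds x] (fun t : ℝ =>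
      2 * ((starRingEnd ℂ) (F' (↑t + ↑y * I)) * ((1:ℂ) * F2 (↑t + ↑y * I))).re
          / Complex.normSq (F' (↑t + ↑y * I))
        - 4 * a * ((starRingEnd ℂ) (F (↑t + ↑y * I)) * ((1:ℂ) * F' (↑t + ↑y * I))).re
          / (1 + a * Complex.normSq (F (↑t + ↑y * I)))) := by
    filter_upwards [hevx] with t ht
    exact (hpx t ht).deriv
  have hsecx : HasDerivAt (fun t : ℝ =>
      2 * ((starRingEnd ℂ) (F' (↑t + ↑y * I)) * ((1:ℂ) * F2 (↑t + ↑y * I))).re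
          / Complex.normSq (F' (↑t + ↑y * I))
        - 4 * a * ((starRingEnd ℂ) (F (↑t + ↑y * I)) * ((1:ℂ) * F' (↑t + ↑y * I))).re
          / (1 + a * Complex.normSq (F (↑t + ↑y * I))))
      ((2 * (Complex.normSq ((1:ℂ) * F2 ζ) + ((starRingEnd ℂ) (F' ζ) * ((1:ℂ) * ((1:ℂ) * F3 ζ))).re)
          * Complex.normSq (F' ζ)
        - (2 * ((starRingEnd ℂ) (F' ζ) * ((1:ℂ) * F2 ζ)).re)^2) / (Complex.normSq (F' ζ))^2
      - 4 * a * ((Complex.normSq ((1:ℂ) * F' ζ)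
            + ((starRingEnd ℂ) (F ζ) * ((1:ℂ) * ((1:ℂ) * F2 ζ))).re)
          * (1 + a * Complex.normSq (F ζ))
        - 2 * a * (((starRingEnd ℂ) (F ζ) * ((1:ℂ) * F' ζ)).re)^2)
          / (1 + a * Complex.normSq (F ζ))^2) x := by
    apply hasDerivAt_formula a 1
      (g := fun s : ℝ => F (↑s + ↑y * I)) (g1 := fun s : ℝ => F' (↑s + ↑y * I))
      (g2 := fun s : ℝ => F2 (↑s + ↑y * I)) (g3x := F3 ζ)
    · simpa using lineX x y (hF _ hxy)
    · simpa using lineX x y (hD1 _ hxy)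
    · simpa using lineX x y (hD2 _ hxy)
    · exact hF' ζ hxy
    · exact hNpos ζ hxy
  have hxx : pdx2 (pdx2 f) x y =
      (2 * (Complex.normSq ((1:ℂ) * F2 ζ) + ((starRingEnd ℂ) (F' ζ) * ((1:ℂ) * ((1:ℂ) * F3 ζ))).re)
          * Complex.normSq (F' ζ)
        - (2 * ((starRingEnd ℂ) (F' ζ) * ((1:ℂ) * F2 ζ)).re)^2) / (Complex.normSq (F' ζ))^2
      - 4 * a * ((Complex.normSq ((1:ℂ) * F' ζ)
            + ((starRingEnd ℂ) (F ζ) * ((1:ℂ) * ((1:ℂ) * F2 ζ))).re)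
          * (1 + a * Complex.normSq (F ζ))
        - 2 * a * (((starRingEnd ℂ) (F ζ) * ((1:ℂ) * F' ζ)).re)^2)
          / (1 + a * Complex.normSq (F ζ))^2 := by
    show deriv (fun t => pdx2 f t y) x = _
    rw [hpdx_eq.deriv_eq]
    exact hsecx.deriv
  -- y direction
  have hpy : ∀ s : ℝ, (↑x + ↑s * I) ∈ Ω → HasDerivAt (fun t => f x t)
      (2 * ((starRingEnd ℂ) (F' (↑x + ↑s * I)) * (I * F2 (↑x + ↑s * I))).re
          / Complex.normSq (F' (↑x + ↑s * I))
        - 4 * a * ((starRingEnd ℂ) (F (↑x + ↑s * I)) * (I * F' (↑x + ↑s * I))).re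
          / (1 + a * Complex.normSq (F (↑x + ↑s * I)))) s := by
    intro s hs
    have hg : HasDerivAt (fun t : ℝ => F (↑x + ↑t * I)) (I * F' (↑x + ↑s * I)) s :=
      lineY x s (hF _ hs)
    have hg1 : HasDerivAt (fun t : ℝ => F' (↑x + ↑t * I)) (I * F2 (↑x + ↑s * I)) s :=
      lineY x s (hD1 _ hs)
    have H := hasDerivAt_logquot a hg hg1 (hF' _ hs) (hNpos _ hs)
    have hfe : (fun t => f x t) = fun t : ℝ => Real.log (4 * Complex.normSq (F' (↑x + ↑t * I)) /
        (1 + a * Complex.normSq (F (↑x + ↑t * I)))^2) := funext fun t : ℝ => hf' x t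
    rw [hfe]
    exact H
  have hevy : ∀ᶠ s : ℝ in nhds y, ((x:ℂ) + ↑s * I) ∈ Ω := by
    have hc : Continuous fun s : ℝ => ((x:ℂ) + ↑s * I) :=
      continuous_const.add (Complex.continuous_ofReal.mul continuous_const)
    exact (hc.isOpen_preimage _ hΩ).mem_nhds hxy
  have hpdy_eq : (fun s => pdy2 f x s) =ᶠ[nhds y] (fun s : ℝ =>
      2 * ((starRingEnd ℂ) (F' (↑x + ↑s * I)) * (I * F2 (↑x + ↑s * I))).re
          / Complex.normSq (F' (↑x + ↑s * I))
        - 4 * a * ((starRingEnd ℂ) (F (↑x + ↑s * I)) * (I * F' (↑x + ↑s * I))).re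
          / (1 + a * Complex.normSq (F (↑x + ↑s * I)))) := by
    filter_upwards [hevy] with s hs
    exact (hpy s hs).deriv
  have hsecy : HasDerivAt (fun s : ℝ =>
      2 * ((starRingEnd ℂ) (F' (↑x + ↑s * I)) * (I * F2 (↑x + ↑s * I))).re
          / Complex.normSq (F' (↑x + ↑s * I))
        - 4 * a * ((starRingEnd ℂ) (F (↑x + ↑s * I)) * (I * F' (↑x + ↑s * I))).re
          / (1 + a * Complex.normSq (F (↑x + ↑s * I))))
      ((2 * (Complex.normSq (I * F2 ζ) + ((starRingEnd ℂ) (F' ζ) * (I * (I * F3 ζ))).re)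
          * Complex.normSq (F' ζ)
        - (2 * ((starRingEnd ℂ) (F' ζ) * (I * F2 ζ)).re)^2) / (Complex.normSq (F' ζ))^2
      - 4 * a * ((Complex.normSq (I * F' ζ)
            + ((starRingEnd ℂ) (F ζ) * (I * (I * F2 ζ))).re)
          * (1 + a * Complex.normSq (F ζ))
        - 2 * a * (((starRingEnd ℂ) (F ζ) * (I * F' ζ)).re)^2)
          / (1 + a * Complex.normSq (F ζ))^2) y := by
    apply hasDerivAt_formula a I
      (g := fun s : ℝ => F (↑x + ↑s * I)) (g1 := fun s : ℝ => F' (↑x + ↑s * I))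
      (g2 := fun s : ℝ => F2 (↑x + ↑s * I)) (g3x := F3 ζ)
    · exact lineY x y (hF _ hxy)
    · exact lineY x y (hD1 _ hxy)
    · exact lineY x y (hD2 _ hxy)
    · exact hF' ζ hxy
    · exact hNpos ζ hxy
  have hyy : pdy2 (pdy2 f) x y =
      (2 * (Complex.normSq (I * F2 ζ) + ((starRingEnd ℂ) (F' ζ) * (I * (I * F3 ζ))).re)
          * Complex.normSq (F' ζ)
        - (2 * ((starRingEnd ℂ) (F' ζ) * (I * F2 ζ)).re)^2) / (Complex.normSq (F' ζ))^2
      - 4 * a * ((Complex.normSq (I * F' ζ)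
            + ((starRingEnd ℂ) (F ζ) * (I * (I * F2 ζ))).re)
          * (1 + a * Complex.normSq (F ζ))
        - 2 * a * (((starRingEnd ℂ) (F ζ) * (I * F' ζ)).re)^2)
          / (1 + a * Complex.normSq (F ζ))^2 := by
    show deriv (fun s => pdy2 f x s) y = _
    rw [hpdy_eq.deriv_eq]
    exact hsecy.deriv
  have hexp : Real.exp (f x y) =
      4 * Complex.normSq (F' ζ) / (1 + a * Complex.normSq (F ζ))^2 := by
    rw [hf' x y]
    exact Real.exp_log (div_pos (by
      have hvpos : (0:ℝ) < Complex.normSq (F' ζ) := Complex.normSq_pos.mpr (hF' ζ hxy)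
      linarith) (pow_pos (hNpos ζ hxy) 2))
  rw [hxx, hyy, hexp]
  simp only [Complex.mul_re, Complex.mul_im, Complex.normSq_apply, Complex.conj_re,
    Complex.conj_im, Complex.I_re, Complex.I_im, Complex.one_re, Complex.one_im,
    mul_zero, zero_mul, mul_one, one_mul, zero_sub, sub_zero, zero_add, add_zero, neg_neg,
    neg_mul, mul_neg, neg_sub]
  field_simp
  ring
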